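/- In the NE-HPE framework with σ < 1 and w (m,M)-regular, for every t ∈ ℝ and every k ≥ 1 there exists an index i ≤ k such that ‖r_i‖* ≤ (2M/√m)·√( ((1+σ)(dw)_0 + 2η_0)/(1-σ) · λ_i^{t-2}/Σ_{j=1}^k λ_j^t ) and ε_i ≤ ((1+σ)(dw)_0 + 2η_0)/(1-σ) · λ_i^{t-1}/Σ_{j=1}^k λ_j^t, where (dw)_0 = inf{(dw)_{z_0}(z*) : z* ∈ T^{-1}(0)}. -/

import Mathlib

/-- The dual (extended) seminorm of a seminorm `p` on a real inner product space. -/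
noncomputable def dualSN {Z : Type*} [NormedAddCommGroup Z] [InnerProductSpace ℝ Z]
    (p : Seminorm ℝ Z) (u : Z) : EReal :=
  ⨆ v : {v : Z // p v ≤ 1}, ((inner ℝ u v.1 : ℝ) : EReal)

/-- A set-valued operator `T` is monotone. -/
def IsMonotoneOp {Z : Type*} [NormedAddCommGroup Z] [InnerProductSpace ℝ Z]
    (T : Z → Set Z) : Prop :=
  ∀ u₁ v₁ u₂ v₂ : Z, u₂ ∈ T u₁ → v₂ ∈ T v₁ → 0 ≤ (inner ℝ (u₂ - v₂) (u₁ - v₁) : ℝ)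

/-- A monotone operator is maximal. -/
def IsMaximalMonotoneOp {Z : Type*} [NormedAddCommGroup Z] [InnerProductSpace ℝ Z]
    (T : Z → Set Z) : Prop :=
  IsMonotoneOp T ∧
    ∀ u v : Z, (∀ u₁ u₂ : Z, u₂ ∈ T u₁ → 0 ≤ (inner ℝ (v - u₂) (u - u₁) : ℝ)) → v ∈ T u

/-- The `ε`-enlargement `T^{[ε]}` of a monotone operator `T`. -/
def epsEnlargement {Z : Type*} [NormedAddCommGroup Z] [InnerProductSpace ℝ Z]
    (T : Z → Set Z) (ε : ℝ) (v : Z) : Set Z :=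
  {v' : Z | ∀ v₁ v₂ : Z, v₂ ∈ T v₁ → -ε ≤ (inner ℝ (v' - v₂) (v - v₁) : ℝ)}

set_option maxHeartbeats 1200000 in
/-- Pointwise estimates for the NE-HPE framework with `σ < 1` and `w` an
`(m,M)`-regular distance generating function: for every `t ∈ ℝ` and `k ≥ 1` there is an
index `i ≤ k` with
`‖r_i‖* ≤ (2M/√m)·√( ((1+σ)(dw)_0 + 2η_0)/(1-σ) · λ_i^{t-2}/Σ_{j=1}^k λ_j^t )` and
`ε_i ≤ ((1+σ)(dw)_0 + 2η_0)/(1-σ) · λ_i^{t-1}/Σ_{j=1}^k λ_j^t`, where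
`(dw)_0 = inf {(dw)_{z_0}(z*) : z* ∈ T⁻¹(0)}`. -/
theorem nehpe_pointwise {Z : Type*} [NormedAddCommGroup Z] [InnerProductSpace ℝ Z]
    [FiniteDimensional ℝ Z]
    (Zs : Set Z) (hZs : Convex ℝ Zs) (hZsclosed : IsClosed Zs) (p : Seminorm ℝ Z)
    (w : Z → ℝ) (g : Z → Z) (m M : ℝ) (hm : 0 < m) (hM : 0 < M)
    (dw : Z → Z → ℝ)
    (hdw : ∀ z z' : Z, dw z z' = w z' - w z - (inner ℝ (g z) (z' - z) : ℝ))
    (hstrong : ∀ z ∈ Zs, ∀ z' ∈ Zs, m / 2 * (p (z - z'))^2 ≤ dw z z')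
    (hlip : ∀ z ∈ Zs, ∀ z' ∈ Zs, dualSN p (g z - g z') ≤ ((M * p (z - z') : ℝ) : EReal))
    (T : Z → Set Z) (hT : IsMaximalMonotoneOp T)
    (hdom : ∀ v : Z, (T v).Nonempty → v ∈ Zs)
    (hT0 : ∃ zs : Z, 0 ∈ T zs)
    (z ztil : ℕ → Z) (hzZ : ∀ k, z k ∈ Zs) (hztilZ : ∀ k, ztil k ∈ Zs)
    (lam eps eta : ℕ → ℝ) (r : ℕ → Z) (σ : ℝ)
    (hσ0 : 0 ≤ σ) (hσ1 : σ < 1)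
    (hlam : ∀ k, 1 ≤ k → 0 < lam k)
    (heps : ∀ k, 1 ≤ k → 0 ≤ eps k)
    (heta : ∀ k, 0 ≤ eta k)
    (hr : ∀ k, 1 ≤ k → r k = (1 / lam k) • (g (z (k - 1)) - g (z k)))
    (hincl : ∀ k, 1 ≤ k → r k ∈ epsEnlargement T (eps k) (ztil k))
    (herr : ∀ k, 1 ≤ k →
      dw (z k) (ztil k) + lam k * eps k + eta k ≤ σ * dw (z (k - 1)) (ztil k) + eta (k - 1))
    (dw0 : ℝ) (hdw0 : dw0 = sInf ((fun zs => dw (z 0) zs) '' {zs : Z | 0 ∈ T zs}))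
    (t : ℝ) (k : ℕ) (hk : 1 ≤ k) :
    ∃ i, 1 ≤ i ∧ i ≤ k ∧
      dualSN p (r i)
          ≤ ((2 * M / Real.sqrt m *
              Real.sqrt (((1 + σ) * dw0 + 2 * eta 0) / (1 - σ) *
                (lam i ^ (t - 2) / ∑ j ∈ Finset.Icc 1 k, lam j ^ t)) : ℝ) : EReal) ∧
      eps i ≤ ((1 + σ) * dw0 + 2 * eta 0) / (1 - σ) *
          (lam i ^ (t - 1) / ∑ j ∈ Finset.Icc 1 k, lam j ^ t) := by

  classical
  obtain ⟨zs0, hzs0⟩ := hT0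
  have h1σ : (0:ℝ) < 1 - σ := by linarith
  have h1σ' : (0:ℝ) < 1 + σ := by linarith
  -- nonnegativity of dw on Zs
  have hdwnn : ∀ a ∈ Zs, ∀ b ∈ Zs, 0 ≤ dw a b := by
    intro a ha b hb
    nlinarith [hstrong a ha b hb, sq_nonneg (p (a - b)), hm.le]
  -- three point identity
  have h3 : ∀ a b c : Z, dw a c - dw b c - dw a b = (inner ℝ (g a - g b) (b - c) : ℝ) := by
    intro a b c
    simp only [hdw, inner_sub_left, inner_sub_right]
    ring
  -- one-step estimate
  have hstep : ∀ y, 0 ∈ T y → ∀ j, 1 ≤ j →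
      dw (z j) y ≤ dw (z (j-1)) y - (1 - σ) * dw (z (j-1)) (ztil j) + eta (j-1) - eta j := by
    intro y hy j hj
    have hlj := hlam j hj
    have hga : g (z (j-1)) - g (z j) = lam j • r j := by
      rw [hr j hj, smul_smul, mul_one_div, div_self hlj.ne', one_smul]
    have hinc : -eps j ≤ (inner ℝ (r j) (ztil j - y) : ℝ) := by
      have := hincl j hj y 0 hy
      simpa using this
    have e1 : dw (z (j-1)) y - dw (z j) y - dw (z (j-1)) (z j)
        = lam j * (inner ℝ (r j) (z j - y) : ℝ) := by
      rw [h3, hga, real_inner_smul_left]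
    have e2 : dw (z (j-1)) (ztil j) - dw (z j) (ztil j) - dw (z (j-1)) (z j)
        = lam j * (inner ℝ (r j) (z j - ztil j) : ℝ) := by
      rw [h3, hga, real_inner_smul_left]
    have e3 : lam j * (inner ℝ (r j) (z j - y) : ℝ)
        = lam j * (inner ℝ (r j) (z j - ztil j) : ℝ)
          + lam j * (inner ℝ (r j) (ztil j - y) : ℝ) := by
      rw [← mul_add, ← inner_add_right]
      congr 2
      abel
    have h4 : lam j * (-eps j) ≤ lam j * (inner ℝ (r j) (ztil j - y) : ℝ) :=
      mul_le_mul_of_nonneg_left hinc hlj.le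
    have he := herr j hj
    nlinarith [e1, e2, e3, h4, he]
  -- telescoping I
  have htel : ∀ y, 0 ∈ T y → ∀ n : ℕ,
      dw (z n) y + (1 - σ) * ∑ j ∈ Finset.Icc 1 n, dw (z (j-1)) (ztil j)
        ≤ dw (z 0) y + eta 0 - eta n := by
    intro y hy n
    induction n with
    | zero => simp
    | succ n ih =>
      rw [Finset.sum_Icc_succ_top (by omega : 1 ≤ n + 1)]
      have hs := hstep y hy (n+1) (by omega)
      simp only [Nat.add_sub_cancel] at hs ⊢
      nlinarith [hs, ih]
  -- telescoping II
  have htel2 : ∀ n : ℕ,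
      ∑ j ∈ Finset.Icc 1 n, (dw (z j) (ztil j) + lam j * eps j)
        ≤ σ * ∑ j ∈ Finset.Icc 1 n, dw (z (j-1)) (ztil j) + eta 0 - eta n := by
    intro n
    induction n with
    | zero => simp
    | succ n ih =>
      rw [Finset.sum_Icc_succ_top (by omega : 1 ≤ n + 1),
        Finset.sum_Icc_succ_top (by omega : 1 ≤ n + 1)]
      have hs := herr (n+1) (by omega)
      simp only [Nat.add_sub_cancel] at hs ⊢
      nlinarith [hs, ih]
  -- key bound for arbitrary zero of T
  have hkey : ∀ y, 0 ∈ T y → (1 - σ) * ∑ j ∈ Finset.Icc 1 k,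
      (dw (z (j-1)) (ztil j) + (dw (z j) (ztil j) + lam j * eps j))
      ≤ (1 + σ) * dw (z 0) y + 2 * eta 0 := by
    intro y hy
    have h1 := htel y hy k
    have h2 := htel2 k
    have hS0 : 0 ≤ ∑ j ∈ Finset.Icc 1 k, dw (z (j-1)) (ztil j) :=
      Finset.sum_nonneg fun j _ => hdwnn _ (hzZ _) _ (hztilZ _)
    have hzky : 0 ≤ dw (z k) y := hdwnn _ (hzZ _) _ (hdom y ⟨0, hy⟩)
    rw [Finset.sum_add_distrib]
    have h1' : (1 - σ) * ∑ j ∈ Finset.Icc 1 k, dw (z (j-1)) (ztil j)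
        ≤ dw (z 0) y + eta 0 := by
      have := heta k; linarith
    have h2' : ∑ j ∈ Finset.Icc 1 k, (dw (z j) (ztil j) + lam j * eps j)
        ≤ σ * ∑ j ∈ Finset.Icc 1 k, dw (z (j-1)) (ztil j) + eta 0 := by
      have := heta k; linarith
    nlinarith [mul_le_mul_of_nonneg_left h2' h1σ.le,
      mul_le_mul_of_nonneg_left h1' h1σ'.le]
  set Λ : ℝ := ∑ j ∈ Finset.Icc 1 k, lam j ^ t with hΛdef
  set A : ℝ := ((1 + σ) * dw0 + 2 * eta 0) / (1 - σ) with hAdef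
  set d : ℕ → ℝ := fun j => dw (z (j-1)) (ztil j) + (dw (z j) (ztil j) + lam j * eps j)
    with hddef
  have hdnn : ∀ j ∈ Finset.Icc 1 k, 0 ≤ d j := by
    intro j hj
    obtain ⟨hj1, hj2⟩ := Finset.mem_Icc.1 hj
    have := hdwnn _ (hzZ (j-1)) _ (hztilZ j)
    have := hdwnn _ (hzZ j) _ (hztilZ j)
    have := mul_nonneg (hlam j hj1).le (heps j hj1)
    simp only [hddef]
    linarith
  have hSd0 : 0 ≤ ∑ j ∈ Finset.Icc 1 k, d j := Finset.sum_nonneg hdnn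
  -- the sum of d is at most A
  have hinfle : ((1 - σ) * ∑ j ∈ Finset.Icc 1 k, d j - 2 * eta 0) / (1 + σ) ≤ dw0 := by
    rw [hdw0]
    refine le_csInf ⟨_, ⟨zs0, hzs0, rfl⟩⟩ ?_
    rintro b ⟨y, hy, rfl⟩
    rw [div_le_iff₀ h1σ']
    have := hkey y hy
    linarith
  have hA : ∑ j ∈ Finset.Icc 1 k, d j ≤ A := by
    rw [hAdef, le_div_iff₀ h1σ]
    rw [div_le_iff₀ h1σ'] at hinfle
    linarith
  have hA0 : 0 ≤ A := le_trans hSd0 hA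
  have hΛpos : 0 < Λ :=
    Finset.sum_pos (fun j hj => Real.rpow_pos_of_pos (hlam j (Finset.mem_Icc.1 hj).1) t)
      ⟨1, Finset.mem_Icc.2 ⟨le_refl 1, hk⟩⟩
  -- pigeonhole
  have hpig : ∃ i ∈ Finset.Icc 1 k, d i ≤ A * (lam i ^ t / Λ) := by
    by_contra hcon
    push_neg at hcon
    have hlt : ∑ j ∈ Finset.Icc 1 k, A * (lam j ^ t / Λ) < ∑ j ∈ Finset.Icc 1 k, d j :=
      Finset.sum_lt_sum_of_nonempty ⟨1, Finset.mem_Icc.2 ⟨le_refl 1, hk⟩⟩ hcon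
    have heq : ∑ j ∈ Finset.Icc 1 k, A * (lam j ^ t / Λ) = A := by
      rw [← Finset.mul_sum, ← Finset.sum_div, ← hΛdef, div_self hΛpos.ne', mul_one]
    rw [heq] at hlt
    linarith
  obtain ⟨i, hiIcc, hdi⟩ := hpig
  obtain ⟨hi1, hi2⟩ := Finset.mem_Icc.1 hiIcc
  have hlami := hlam i hi1
  have hDi : 0 ≤ dw (z (i-1)) (ztil i) := hdwnn _ (hzZ _) _ (hztilZ _)
  have hEi : 0 ≤ dw (z i) (ztil i) := hdwnn _ (hzZ _) _ (hztilZ _)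
  have hLi : 0 ≤ lam i * eps i := mul_nonneg hlami.le (heps i hi1)
  have hdival : d i = dw (z (i-1)) (ztil i) + (dw (z i) (ztil i) + lam i * eps i) := rfl
  refine ⟨i, hi1, hi2, ?_, ?_⟩
  · -- the residual bound
    set q : ℝ := p (z (i-1) - z i) with hqdef
    set qa : ℝ := p (z (i-1) - ztil i) with hqadef
    set qb : ℝ := p (z i - ztil i) with hqbdef
    have hq0 : 0 ≤ q := apply_nonneg p _
    have hqa0 : 0 ≤ qa := apply_nonneg p _
    have hqb0 : 0 ≤ qb := apply_nonneg p _
    have htri : q ≤ qa + qb := by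
      have harg : z (i-1) - z i = (z (i-1) - ztil i) - (z i - ztil i) := by abel
      rw [hqdef, harg]
      exact map_sub_le_add p _ _
    have hqa2 : m / 2 * qa ^ 2 ≤ dw (z (i-1)) (ztil i) := hstrong _ (hzZ _) _ (hztilZ _)
    have hqb2 : m / 2 * qb ^ 2 ≤ dw (z i) (ztil i) := hstrong _ (hzZ _) _ (hztilZ _)
    have hq2 : m * q ^ 2 ≤ 4 * (A * (lam i ^ t / Λ)) := by
      have hqq : q * q ≤ (qa + qb) * (qa + qb) :=
        mul_le_mul htri htri hq0 (by linarith)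
      rw [hdival] at hdi
      nlinarith [mul_nonneg hm.le (sq_nonneg (qa - qb)), hqq, hqa2, hqb2, hLi]
    set X : ℝ := A * (lam i ^ (t - 2) / Λ) with hXdef
    have hX0 : 0 ≤ X := by
      have := Real.rpow_nonneg hlami.le (t - 2)
      exact mul_nonneg hA0 (div_nonneg this hΛpos.le)
    have hrw2 : lam i ^ (t - 2) = lam i ^ t / lam i ^ 2 := by
      rw [show (2:ℝ) = ((2:ℕ):ℝ) by norm_num, Real.rpow_sub hlami, Real.rpow_natCast]
    have hB : 1 / lam i * (M * q) ≤ 2 * M / Real.sqrt m * Real.sqrt X := by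
      have hL0 : 0 ≤ 1 / lam i * (M * q) :=
        mul_nonneg (one_div_nonneg.2 hlami.le) (mul_nonneg hM.le hq0)
      have hR0 : 0 ≤ 2 * M / Real.sqrt m * Real.sqrt X :=
        mul_nonneg (div_nonneg (by linarith) (Real.sqrt_nonneg m)) (Real.sqrt_nonneg X)
      have e : (2 * M / Real.sqrt m * Real.sqrt X) ^ 2 = 4 * M ^ 2 / m * X := by
        rw [mul_pow, div_pow, Real.sq_sqrt hX0, Real.sq_sqrt hm.le]
        ring
      have key : (1 / lam i * (M * q)) ^ 2 ≤ (2 * M / Real.sqrt m * Real.sqrt X) ^ 2 := by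
        rw [e, hXdef, hrw2]
        have hc : M ^ 2 / lam i ^ 2 / m * (m * q ^ 2)
            ≤ M ^ 2 / lam i ^ 2 / m * (4 * (A * (lam i ^ t / Λ))) :=
          mul_le_mul_of_nonneg_left hq2
            (div_nonneg (div_nonneg (sq_nonneg M) (sq_nonneg (lam i))) hm.le)
        calc (1 / lam i * (M * q)) ^ 2
            = M ^ 2 / lam i ^ 2 / m * (m * q ^ 2) := by
              field_simp
          _ ≤ M ^ 2 / lam i ^ 2 / m * (4 * (A * (lam i ^ t / Λ))) := hc
          _ = 4 * M ^ 2 / m * (A * (lam i ^ t / lam i ^ 2 / Λ)) := by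
              field_simp
      calc 1 / lam i * (M * q) = Real.sqrt ((1 / lam i * (M * q)) ^ 2) :=
            (Real.sqrt_sq hL0).symm
        _ ≤ Real.sqrt ((2 * M / Real.sqrt m * Real.sqrt X) ^ 2) := Real.sqrt_le_sqrt key
        _ = 2 * M / Real.sqrt m * Real.sqrt X := Real.sqrt_sq hR0
    have hdual : dualSN p (r i) ≤ ((1 / lam i * (M * q) : ℝ) : EReal) := by
      refine iSup_le ?_
      rintro ⟨v, hv⟩
      have hle : ((inner ℝ (g (z (i-1)) - g (z i)) v : ℝ) : EReal)
          ≤ ((M * p (z (i-1) - z i) : ℝ) : EReal) := by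
        refine le_trans ?_ (hlip _ (hzZ _) _ (hzZ _))
        exact le_iSup (fun v : {v : Z // p v ≤ 1} =>
          ((inner ℝ (g (z (i-1)) - g (z i)) v.1 : ℝ) : EReal)) ⟨v, hv⟩
      rw [EReal.coe_le_coe_iff] at hle
      have hrv : (inner ℝ (r i) v : ℝ)
          = 1 / lam i * (inner ℝ (g (z (i-1)) - g (z i)) v : ℝ) := by
        rw [hr i hi1, real_inner_smul_left]
      have : (inner ℝ (r i) v : ℝ) ≤ 1 / lam i * (M * q) := by
        rw [hrv, hqdef]
        exact mul_le_mul_of_nonneg_left hle (one_div_nonneg.2 hlami.le)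
      exact_mod_cast EReal.coe_le_coe_iff.2 this
    exact le_trans hdual (EReal.coe_le_coe_iff.2 hB)
  · -- the eps bound
    have hLe : lam i * eps i ≤ A * (lam i ^ t / Λ) := by
      rw [hdival] at hdi
      linarith
    have hrw1 : A * (lam i ^ (t - 1) / Λ) = A * (lam i ^ t / Λ) / lam i := by
      rw [Real.rpow_sub hlami, Real.rpow_one]
      ring
    rw [hrw1, le_div_iff₀ hlami]
    linarith
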